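/- arXiv:1904.01191 — 3 statements merged into one kernel-verified Lean document; each statement's English description precedes it below -/
import Mathlib

section
/- Equality of model-based and model-free expected TD(0) updates under the best non-linear model: let $(X, A, X', R)$ be random variables on a finite probability space with $X, X'$ taking values in $\mathbb{R}^m$, $A$ in a finite set, $R$ in $\mathbb{R}$. Define $\hat x^*(\phi, a) = \mathbb{E}[X' \mid X = \phi, A = a]$ and $\hat r^*(\phi, a) = \mathbb{E}[R \mid X = \phi, A = a]$ (on events of positive probability). Then for any $w \in \mathbb{R}^m$, $\mathbb{E}[(\hat r^*(X, A) + \gamma w^\top \hat x^*(X, A) - w^\top X)\, X] = \mathbb{E}[(R + \gamma w^\top X' - w^\top X)\, X]$. -/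
open Matrix Finset
open scoped Classical

/-- the expected TD(0) update using the best non-linear model
(exact conditional expectations given `(X, A)`) equals the expected
model-free TD(0) update. -/
theorem model_based_td_eq_model_free_td
    {m : ℕ} {Ω 𝒜 : Type*} [Fintype Ω] [Fintype 𝒜]
    (p : Ω → ℝ) (hp : ∀ ω, 0 ≤ p ω) (hp1 : ∑ ω, p ω = 1)
    (X X' : Ω → (Fin m → ℝ)) (A : Ω → 𝒜) (R : Ω → ℝ)
    (γ : ℝ) (hγ : 0 ≤ γ ∧ γ < 1) (w : Fin m → ℝ)
    (P : (Fin m → ℝ) → 𝒜 → ℝ)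
    (hP : ∀ φ a, P φ a = ∑ ω ∈ univ.filter (fun ω => X ω = φ ∧ A ω = a), p ω)
    (xstar : (Fin m → ℝ) → 𝒜 → (Fin m → ℝ)) (rstar : (Fin m → ℝ) → 𝒜 → ℝ)
    (hx : ∀ φ a, 0 < P φ a →
      xstar φ a = (P φ a)⁻¹ • ∑ ω ∈ univ.filter (fun ω => X ω = φ ∧ A ω = a), p ω • X' ω)
    (hr : ∀ φ a, 0 < P φ a →
      rstar φ a = (P φ a)⁻¹ * ∑ ω ∈ univ.filter (fun ω => X ω = φ ∧ A ω = a), p ω * R ω) :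
    ∑ ω, p ω • (rstar (X ω) (A ω) + γ * (w ⬝ᵥ xstar (X ω) (A ω)) - w ⬝ᵥ X ω) • X ω
      = ∑ ω, p ω • (R ω + γ * (w ⬝ᵥ X' ω) - w ⬝ᵥ X ω) • X ω := by
  classical
  have hmaps : ∀ ω ∈ (univ : Finset Ω),
      (X ω, A ω) ∈ Finset.image (fun ω => (X ω, A ω)) univ :=
    fun ω _ => Finset.mem_image_of_mem _ (Finset.mem_univ ω)
  rw [← Finset.sum_fiberwise_of_maps_to hmaps, ← Finset.sum_fiberwise_of_maps_to hmaps]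
  apply Finset.sum_congr rfl
  rintro ⟨φ, a⟩ hy
  have hfib : (univ.filter (fun ω => (X ω, A ω) = (φ, a)))
      = univ.filter (fun ω => X ω = φ ∧ A ω = a) := by
    apply Finset.filter_congr; intro ω _; simp [Prod.ext_iff]
  rw [hfib]
  set s := univ.filter (fun ω => X ω = φ ∧ A ω = a) with hs
  have hmem : ∀ ω ∈ s, X ω = φ ∧ A ω = a := by
    intro ω hω; simpa [hs] using hω
  have hPs : P φ a = ∑ ω ∈ s, p ω := hP φ a
  by_cases hpos : 0 < P φ a
  · have hPne : P φ a ≠ 0 := ne_of_gt hpos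
    have hrs : P φ a * rstar φ a = ∑ ω ∈ s, p ω * R ω := by
      rw [hr φ a hpos, ← mul_assoc, mul_inv_cancel₀ hPne, one_mul]
    have hxs : P φ a • xstar φ a = ∑ ω ∈ s, p ω • X' ω := by
      rw [hx φ a hpos, smul_smul, mul_inv_cancel₀ hPne, one_smul]
    have hwx : P φ a * (w ⬝ᵥ xstar φ a) = ∑ ω ∈ s, p ω * (w ⬝ᵥ X' ω) := by
      calc P φ a * (w ⬝ᵥ xstar φ a) = w ⬝ᵥ (P φ a • xstar φ a) := by
            rw [dotProduct_smul]; simp [smul_eq_mul]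
        _ = ∑ ω ∈ s, p ω * (w ⬝ᵥ X' ω) := by
            rw [hxs]
            induction s using Finset.induction with
            | empty => simp
            | insert _ _ h ih => simp [Finset.sum_insert h, dotProduct_add, ih, smul_eq_mul]
    have hL : ∑ ω ∈ s, p ω • (rstar (X ω) (A ω) + γ * (w ⬝ᵥ xstar (X ω) (A ω)) - w ⬝ᵥ X ω) • X ω
        = (P φ a * (rstar φ a + γ * (w ⬝ᵥ xstar φ a) - w ⬝ᵥ φ)) • φ := by
      rw [Finset.sum_congr rfl (fun ω hω => by
        rw [(hmem ω hω).1, (hmem ω hω).2]), ← Finset.sum_smul, hPs, smul_smul]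
    have hR : ∑ ω ∈ s, p ω • (R ω + γ * (w ⬝ᵥ X' ω) - w ⬝ᵥ X ω) • X ω
        = (∑ ω ∈ s, p ω * (R ω + γ * (w ⬝ᵥ X' ω) - w ⬝ᵥ φ)) • φ := by
      rw [Finset.sum_smul]
      refine Finset.sum_congr rfl (fun ω hω => ?_)
      rw [(hmem ω hω).1, smul_smul]
    rw [hL, hR]
    congr 1
    have : ∑ ω ∈ s, p ω * (R ω + γ * (w ⬝ᵥ X' ω) - w ⬝ᵥ φ)
        = (∑ ω ∈ s, p ω * R ω) + γ * (∑ ω ∈ s, p ω * (w ⬝ᵥ X' ω))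
          - (∑ ω ∈ s, p ω) * (w ⬝ᵥ φ) := by
      simp only [mul_add, mul_sub]
      rw [Finset.sum_sub_distrib, Finset.sum_add_distrib, Finset.mul_sum, Finset.sum_mul]
      congr 1
      congr 1
      exact Finset.sum_congr rfl fun ω _ => by ring
    rw [this, ← hrs, ← hwx, ← hPs]
    ring
  · have hP0 : P φ a = 0 := le_antisymm (not_lt.mp hpos) (hPs ▸ Finset.sum_nonneg fun ω _ => hp ω)
    have hzero : ∀ ω ∈ s, p ω = 0 := by
      intro ω hω
      have := (Finset.sum_eq_zero_iff_of_nonneg (fun ω _ => hp ω)).mp (hPs ▸ hP0)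
      exact this ω hω
    rw [Finset.sum_eq_zero fun ω hω => by rw [hzero ω hω, zero_smul],
        Finset.sum_eq_zero fun ω hω => by rw [hzero ω hω, zero_smul]]
end

section
/- Consequence for fixed points (Proposition 1, non-linear part): under the setting above, if $\mathbb{E}[X(X - \gamma X')^\top]$ is invertible, then the model-free TD fixed point $w_{\text{env}} = \mathbb{E}[X(X - \gamma X')^\top]^{-1}\mathbb{E}[R\, X]$ equals the fixed point of the expected TD(0) update using the best non-linear model, $w_{\text{non-linear}} = \mathbb{E}[X(X - \gamma \hat x^*(X, A))^\top]^{-1} \mathbb{E}[\hat r^*(X, A)\, X]$, and in particular the latter matrix is also invertible. -/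
set_option maxHeartbeats 1000000

open Matrix Finset
open scoped Classical

/-- Tower-property helper: replacing the conditional expectation `qstar` by the
raw variable `q` inside a weighted sum of linear functionals of the fiber data
does not change the sum. -/
lemma tower_helper {Ω 𝒜 E : Type*} [Fintype Ω]
    (p : Ω → ℝ) (hp : ∀ ω, 0 ≤ p ω)
    (X : Ω → E) (A : Ω → 𝒜) (P : E → 𝒜 → ℝ)
    (S : E → 𝒜 → Finset Ω)
    (hS1 : ∀ ω, ω ∈ S (X ω) (A ω))
    (hS2 : ∀ φ a ω, ω ∈ S φ a → X ω = φ ∧ A ω = a)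
    (hP : ∀ φ a, P φ a = ∑ ω ∈ S φ a, p ω)
    {V W : Type*} [AddCommGroup V] [Module ℝ V] [AddCommGroup W] [Module ℝ W]
    (q : Ω → V) (qstar : E → 𝒜 → V)
    (hq : ∀ φ a, 0 < P φ a → qstar φ a = (P φ a)⁻¹ • ∑ ω ∈ S φ a, p ω • q ω)
    (L : E → 𝒜 → (V →ₗ[ℝ] W)) :
    ∑ ω, p ω • L (X ω) (A ω) (qstar (X ω) (A ω))
      = ∑ ω, p ω • L (X ω) (A ω) (q ω) := by
  classical
  have key : ∀ (f : Ω → W),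
      ∑ ω, f ω = ∑ y ∈ univ.image (fun ω => (X ω, A ω)),
        ∑ ω ∈ univ.filter (fun ω => (X ω, A ω) = y), f ω := by
    intro f
    exact (Finset.sum_fiberwise_of_maps_to
      (fun x _ => Finset.mem_image_of_mem _ (Finset.mem_univ x)) f).symm
  rw [key, key (fun ω => p ω • L (X ω) (A ω) (q ω))]
  refine Finset.sum_congr rfl ?_
  rintro ⟨φ, a⟩ _
  have hfilter : (univ.filter (fun ω => (X ω, A ω) = (φ, a))) = S φ a := by
    ext ω
    simp only [Finset.mem_filter, Finset.mem_univ, true_and, Prod.mk.injEq]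
    constructor
    · rintro ⟨h1, h2⟩; subst h1; subst h2; exact hS1 ω
    · intro h; exact hS2 φ a ω h
  rw [hfilter]
  by_cases hpos : 0 < P φ a
  · have hsum1 : ∑ ω ∈ S φ a, p ω • L (X ω) (A ω) (qstar (X ω) (A ω))
        = ∑ ω ∈ S φ a, p ω • L φ a (qstar φ a) := by
      refine Finset.sum_congr rfl ?_
      intro ω hω
      obtain ⟨h1, h2⟩ := hS2 φ a ω hω
      rw [h1, h2]
    have hsum2 : ∑ ω ∈ S φ a, p ω • L (X ω) (A ω) (q ω)
        = ∑ ω ∈ S φ a, p ω • L φ a (q ω) := by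
      refine Finset.sum_congr rfl ?_
      intro ω hω
      obtain ⟨h1, h2⟩ := hS2 φ a ω hω
      rw [h1, h2]
    rw [hsum1, hsum2, ← Finset.sum_smul, ← hP, hq φ a hpos,
      (L φ a).map_smul, smul_smul, mul_inv_cancel₀ hpos.ne', one_smul,
      map_sum (L φ a) _ _]
    refine Finset.sum_congr rfl ?_
    intro ω _; rw [(L φ a).map_smul]
  · have hzero : ∀ ω ∈ S φ a, p ω = 0 := by
      have h0 : P φ a = 0 := le_antisymm (not_lt.mp hpos)
        (by rw [hP]; exact Finset.sum_nonneg fun ω _ => hp ω)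
      exact (Finset.sum_eq_zero_iff_of_nonneg (fun ω _ => hp ω)).mp
        ((hP φ a).symm.trans h0)
    rw [Finset.sum_eq_zero, Finset.sum_eq_zero]
    · intro ω hω; rw [hzero ω hω, zero_smul]
    · intro ω hω; rw [hzero ω hω, zero_smul]

/-- `vecMulVec` as a linear map in the second argument. -/
def vmvL {m : ℕ} (x : Fin m → ℝ) : (Fin m → ℝ) →ₗ[ℝ] Matrix (Fin m) (Fin m) ℝ where
  toFun y := vecMulVec x y
  map_add' y z := by ext i j; simp [vecMulVec]; ring
  map_smul' c y := by ext i j; simp [vecMulVec]; ring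

/-- if `E[X(X - γX')ᵀ]` is invertible, then the model-free TD
fixed point equals the fixed point of the expected TD(0) update with the best
non-linear model, and the model-based matrix is also invertible. -/
theorem env_fixed_point_eq_nonlinear_model_fixed_point
    {m : ℕ} {Ω 𝒜 : Type*} [Fintype Ω] [Fintype 𝒜]
    (p : Ω → ℝ) (hp : ∀ ω, 0 ≤ p ω) (hp1 : ∑ ω, p ω = 1)
    (X X' : Ω → (Fin m → ℝ)) (A : Ω → 𝒜) (R : Ω → ℝ)
    (γ : ℝ) (hγ : 0 ≤ γ ∧ γ < 1)
    (P : (Fin m → ℝ) → 𝒜 → ℝ)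
    (hP : ∀ φ a, P φ a = ∑ ω ∈ univ.filter (fun ω => X ω = φ ∧ A ω = a), p ω)
    (xstar : (Fin m → ℝ) → 𝒜 → (Fin m → ℝ)) (rstar : (Fin m → ℝ) → 𝒜 → ℝ)
    (hx : ∀ φ a, 0 < P φ a →
      xstar φ a = (P φ a)⁻¹ • ∑ ω ∈ univ.filter (fun ω => X ω = φ ∧ A ω = a), p ω • X' ω)
    (hr : ∀ φ a, 0 < P φ a →
      rstar φ a = (P φ a)⁻¹ * ∑ ω ∈ univ.filter (fun ω => X ω = φ ∧ A ω = a), p ω * R ω)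
    (Aenv Amodel : Matrix (Fin m) (Fin m) ℝ)
    (hAenv : Aenv = ∑ ω, p ω • vecMulVec (X ω) (X ω - γ • X' ω))
    (hAmodel : Amodel = ∑ ω, p ω • vecMulVec (X ω) (X ω - γ • xstar (X ω) (A ω)))
    (hinv : IsUnit Aenv) :
    IsUnit Amodel ∧
      Aenv⁻¹ *ᵥ (∑ ω, p ω • R ω • X ω)
        = Amodel⁻¹ *ᵥ (∑ ω, p ω • rstar (X ω) (A ω) • X ω) := by
  set S : (Fin m → ℝ) → 𝒜 → Finset Ω :=
    fun φ a => univ.filter (fun ω => X ω = φ ∧ A ω = a) with hSdef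
  have hS1 : ∀ ω, ω ∈ S (X ω) (A ω) := by
    intro ω; simp [hSdef]
  have hS2 : ∀ φ a ω, ω ∈ S φ a → X ω = φ ∧ A ω = a := by
    intro φ a ω h; simpa [hSdef] using h
  have hXeq : ∑ ω, p ω • (vmvL (X ω)) (xstar (X ω) (A ω))
      = ∑ ω, p ω • (vmvL (X ω)) (X' ω) :=
    tower_helper p hp X A P S hS1 hS2 hP X' xstar hx (fun φ _ => vmvL φ)
  have hr' : ∀ φ a, 0 < P φ a →
      rstar φ a = (P φ a)⁻¹ • ∑ ω ∈ S φ a, p ω • R ω := by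
    intro φ a h; simpa [smul_eq_mul] using hr φ a h
  have hReq : ∑ ω, p ω • (LinearMap.toSpanSingleton ℝ (Fin m → ℝ) (X ω)) (rstar (X ω) (A ω))
      = ∑ ω, p ω • (LinearMap.toSpanSingleton ℝ (Fin m → ℝ) (X ω)) (R ω) :=
    tower_helper p hp X A P S hS1 hS2 hP R rstar hr'
      (fun φ _ => LinearMap.toSpanSingleton ℝ (Fin m → ℝ) φ)
  have expand : ∀ (y : Ω → Fin m → ℝ) (ω : Ω),
      p ω • vecMulVec (X ω) (X ω - γ • y ω)
        = p ω • vecMulVec (X ω) (X ω) - γ • (p ω • (vmvL (X ω)) (y ω)) := by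
    intro y ω
    have h1 : vecMulVec (X ω) (X ω - γ • y ω)
        = vecMulVec (X ω) (X ω) - γ • vecMulVec (X ω) (y ω) := by
      have := (vmvL (X ω)).map_sub (X ω) (γ • y ω)
      have h2 := (vmvL (X ω)).map_smul γ (y ω)
      simpa [vmvL, h2] using this
    rw [h1, smul_sub, smul_comm]
    rfl
  have hAeq : Amodel = Aenv := by
    rw [hAmodel, hAenv,
      Finset.sum_congr rfl (fun ω _ => expand (fun ω => xstar (X ω) (A ω)) ω),
      Finset.sum_congr rfl (fun ω _ => expand X' ω),
      Finset.sum_sub_distrib, Finset.sum_sub_distrib, ← Finset.smul_sum,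
      ← Finset.smul_sum, hXeq]
  have hRsum : ∑ ω, p ω • rstar (X ω) (A ω) • X ω = ∑ ω, p ω • R ω • X ω := by
    simpa [LinearMap.toSpanSingleton_apply] using hReq
  rw [hAeq, hRsum]
  exact ⟨hinv, rfl⟩
end

section
/- Proposition 2 (MB-MSPBE equals MSPBE for the best non-linear model): with $(X, A, X', R)$ on a finite probability space, $\hat x^*(\phi,a) = \mathbb{E}[X'|X=\phi,A=a]$, $\hat r^*(\phi,a) = \mathbb{E}[R|X=\phi,A=a]$, $C = \mathbb{E}[X X^\top]$ invertible, define $\delta(w) = R + \gamma w^\top X' - w^\top X$ and $\Delta(w) = \hat r^*(X,A) + \gamma w^\top \hat x^*(X,A) - w^\top X$. Then for all $w$: $\mathbb{E}[\Delta(w) X]^\top C^{-1} \mathbb{E}[\Delta(w) X] = \mathbb{E}[\delta(w) X]^\top C^{-1} \mathbb{E}[\delta(w) X]$. -/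
open Matrix Finset
open scoped Classical

/-- Proposition 2: MB-MSPBE built from the best non-linear
model's TD error `Δ(w)` equals MSPBE built from the data TD error `δ(w)`. -/
theorem mbmspbe_eq_mspbe
    {m : ℕ} {Ω 𝒜 : Type*} [Fintype Ω] [Fintype 𝒜]
    (p : Ω → ℝ) (hp : ∀ ω, 0 ≤ p ω) (hp1 : ∑ ω, p ω = 1)
    (X X' : Ω → (Fin m → ℝ)) (A : Ω → 𝒜) (R : Ω → ℝ)
    (γ : ℝ) (hγ : 0 ≤ γ ∧ γ < 1)
    (P : (Fin m → ℝ) → 𝒜 → ℝ)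
    (hP : ∀ φ a, P φ a = ∑ ω ∈ univ.filter (fun ω => X ω = φ ∧ A ω = a), p ω)
    (xstar : (Fin m → ℝ) → 𝒜 → (Fin m → ℝ)) (rstar : (Fin m → ℝ) → 𝒜 → ℝ)
    (hx : ∀ φ a, 0 < P φ a →
      xstar φ a = (P φ a)⁻¹ • ∑ ω ∈ univ.filter (fun ω => X ω = φ ∧ A ω = a), p ω • X' ω)
    (hr : ∀ φ a, 0 < P φ a →
      rstar φ a = (P φ a)⁻¹ * ∑ ω ∈ univ.filter (fun ω => X ω = φ ∧ A ω = a), p ω * R ω)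
    (C : Matrix (Fin m) (Fin m) ℝ)
    (hC : C = ∑ ω, p ω • vecMulVec (X ω) (X ω)) (hCinv : IsUnit C) :
    ∀ w : Fin m → ℝ,
      (∑ ω, p ω • (rstar (X ω) (A ω) + γ * (w ⬝ᵥ xstar (X ω) (A ω)) - w ⬝ᵥ X ω) • X ω)
          ⬝ᵥ (C⁻¹ *ᵥ ∑ ω, p ω • (rstar (X ω) (A ω) + γ * (w ⬝ᵥ xstar (X ω) (A ω)) - w ⬝ᵥ X ω) • X ω)
        = (∑ ω, p ω • (R ω + γ * (w ⬝ᵥ X' ω) - w ⬝ᵥ X ω) • X ω)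
          ⬝ᵥ (C⁻¹ *ᵥ ∑ ω, p ω • (R ω + γ * (w ⬝ᵥ X' ω) - w ⬝ᵥ X ω) • X ω) := by
  intro w
  have hnonneg : ∀ φ a, 0 ≤ P φ a := fun φ a =>
    (hP φ a) ▸ Finset.sum_nonneg (fun ω _ => hp ω)
  have key : (∑ ω, p ω • (rstar (X ω) (A ω) + γ * (w ⬝ᵥ xstar (X ω) (A ω)) - w ⬝ᵥ X ω) • X ω)
      = ∑ ω, p ω • (R ω + γ * (w ⬝ᵥ X' ω) - w ⬝ᵥ X ω) • X ω := by
    rw [← Finset.sum_fiberwise_of_maps_to (g := fun ω => (X ω, A ω))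
          (t := Finset.univ.image (fun ω => (X ω, A ω)))
          (fun x _ => Finset.mem_image_of_mem _ (Finset.mem_univ x))
          (f := fun ω => p ω • (rstar (X ω) (A ω) + γ * (w ⬝ᵥ xstar (X ω) (A ω)) - w ⬝ᵥ X ω) • X ω),
        ← Finset.sum_fiberwise_of_maps_to (g := fun ω => (X ω, A ω))
          (t := Finset.univ.image (fun ω => (X ω, A ω)))
          (fun x _ => Finset.mem_image_of_mem _ (Finset.mem_univ x))
          (f := fun ω => p ω • (R ω + γ * (w ⬝ᵥ X' ω) - w ⬝ᵥ X ω) • X ω)]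
    refine Finset.sum_congr rfl (fun y _ => ?_)
    obtain ⟨φ, a⟩ := y
    have hfilt : (Finset.univ.filter (fun ω => (X ω, A ω) = (φ, a)))
        = Finset.univ.filter (fun ω => X ω = φ ∧ A ω = a) := by
      apply Finset.filter_congr
      intro ω _
      simp [Prod.ext_iff]
    rw [hfilt]
    set S := Finset.univ.filter (fun ω => X ω = φ ∧ A ω = a) with hS
    have hmem : ∀ ω ∈ S, X ω = φ ∧ A ω = a := fun ω h => (Finset.mem_filter.mp h).2
    have hPsum : P φ a = ∑ ω ∈ S, p ω := hP φ a
    rcases eq_or_lt_of_le (hnonneg φ a) with h0 | hpos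
    · have hz : ∀ ω ∈ S, p ω = 0 := by
        intro ω hω
        have hsz : ∑ ω ∈ S, p ω = 0 := by rw [← hPsum, ← h0]
        exact (Finset.sum_eq_zero_iff_of_nonneg (fun ω _ => hp ω)).mp hsz ω hω
      refine (Finset.sum_eq_zero (fun ω hω => ?_)).trans
        (Finset.sum_eq_zero (fun ω hω => ?_)).symm
      · rw [hz ω hω, zero_smul]
      · rw [hz ω hω, zero_smul]
    · have hxs := hx φ a hpos
      have hrs := hr φ a hpos
      have hne : P φ a ≠ 0 := ne_of_gt hpos
      have lhs_eq : ∑ ω ∈ S, p ω • (rstar (X ω) (A ω) + γ * (w ⬝ᵥ xstar (X ω) (A ω)) - w ⬝ᵥ X ω) • X ω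
          = ((∑ ω ∈ S, p ω) * (rstar φ a + γ * (w ⬝ᵥ xstar φ a) - w ⬝ᵥ φ)) • φ := by
        rw [Finset.sum_mul, Finset.sum_smul]
        refine Finset.sum_congr rfl (fun ω hω => ?_)
        obtain ⟨h1, h2⟩ := hmem ω hω
        rw [h1, h2, smul_smul]
      have rhs_eq : ∑ ω ∈ S, p ω • (R ω + γ * (w ⬝ᵥ X' ω) - w ⬝ᵥ X ω) • X ω
          = (∑ ω ∈ S, p ω * (R ω + γ * (w ⬝ᵥ X' ω) - w ⬝ᵥ φ)) • φ := by
        rw [Finset.sum_smul]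
        refine Finset.sum_congr rfl (fun ω hω => ?_)
        obtain ⟨h1, _⟩ := hmem ω hω
        rw [h1, smul_smul]
      rw [lhs_eq, rhs_eq]
      congr 1
      have hrval : P φ a * rstar φ a = ∑ ω ∈ S, p ω * R ω := by
        rw [hrs, ← mul_assoc, mul_inv_cancel₀ hne, one_mul]
      have hxval : P φ a * (w ⬝ᵥ xstar φ a) = ∑ ω ∈ S, p ω * (w ⬝ᵥ X' ω) := by
        have hdot : w ⬝ᵥ ∑ ω ∈ S, p ω • X' ω = ∑ ω ∈ S, p ω * (w ⬝ᵥ X' ω) := by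
          simp only [dotProduct, Finset.sum_apply, Pi.smul_apply, smul_eq_mul, Finset.mul_sum]
          rw [Finset.sum_comm]
          exact Finset.sum_congr rfl fun ω _ => Finset.sum_congr rfl fun i _ => by ring
        rw [hxs, dotProduct_smul, smul_eq_mul, ← mul_assoc, mul_inv_cancel₀ hne, one_mul]
        exact hdot
      have expand : ∑ ω ∈ S, p ω * (R ω + γ * (w ⬝ᵥ X' ω) - w ⬝ᵥ φ)
          = (∑ ω ∈ S, p ω * R ω) + γ * (∑ ω ∈ S, p ω * (w ⬝ᵥ X' ω))
              - (∑ ω ∈ S, p ω) * (w ⬝ᵥ φ) := by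
        rw [Finset.sum_mul, Finset.mul_sum, ← Finset.sum_add_distrib, ← Finset.sum_sub_distrib]
        exact Finset.sum_congr rfl (fun ω _ => by ring)
      rw [expand, ← hrval, ← hxval, ← hPsum]
      ring
  rw [key]
end
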